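/- arXiv:2107.10007 — 3 statements merged into one kernel-verified Lean document; each statement's English description precedes it below -/
import Mathlib

section
/- Let V_0 = ℂ^m with a nondegenerate symmetric form and V_1 = ℂ^{2n} with a symplectic form, m ≤ 2n+1. Every skew-symmetric m × m matrix arises as A* A for some A ∈ Hom(V_0, V_1); i.e. the map q_0 : Hom(V_0, V_1) → so(V_0), A ↦ A* A, is surjective when m ≤ 2n+1. -/
open Matrix

lemma aux_rep (m : ℕ) (n : ℕ) : ∀ (S : Matrix (Fin m) (Fin m) ℂ), Sᵀ = -S →
    ∀ (t : Finset (Fin m)), t.card ≤ 2 * n + 1 → (∀ q ∉ t, ∀ p, S p q = 0) →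
    ∃ x y : Fin n → Fin m → ℂ,
      S = ∑ k, (vecMulVec (x k) (y k) - vecMulVec (y k) (x k)) := by
  induction n with
  | zero =>
    intro S hS t ht hcol
    refine ⟨0, 0, ?_⟩
    have hS' : ∀ p q, S q p = -S p q := fun p q => by
      have := congrFun (congrFun hS p) q
      simpa [Matrix.transpose_apply] using this
    have hzero : S = 0 := by
      ext p q
      by_cases hq : q ∈ t
      · by_cases hp : p ∈ t
        · have hpq : p = q := Finset.card_le_one.mp (by simpa using ht) p hp q hq
          subst hpq
          have h := hS' p p
          simp only [Matrix.zero_apply]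
          linear_combination h / 2
        · have h1 : S q p = 0 := hcol p hp q
          simp only [Matrix.zero_apply]
          rw [hS' q p, h1, neg_zero]
      · simpa using hcol q hq p
    simp [hzero]
  | succ n ih =>
    intro S hS t ht hcol
    have hS' : ∀ p q, S q p = -S p q := fun p q => by
      have := congrFun (congrFun hS p) q
      simpa [Matrix.transpose_apply] using this
    have hdiag : ∀ p, S p p = 0 := fun p => by
      linear_combination (hS' p p) / 2
    by_cases h0 : ∀ p q, S p q = 0
    · refine ⟨0, 0, ?_⟩
      ext p q
      simp [h0, vecMulVec_apply]
    · push_neg at h0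
      obtain ⟨i, j, hij⟩ := h0
      set c : ℂ := S i j with hc
      set u : Fin m → ℂ := fun k => S k j with hu
      set v : Fin m → ℂ := fun k => S k i with hv
      have hne : i ≠ j := by
        rintro rfl; exact hij (hdiag i)
      have hjt : j ∈ t := by
        by_contra hj; exact hij (hcol j hj i)
      have hit : i ∈ t := by
        by_contra hi
        have h1 : S j i = 0 := hcol i hi j
        exact hij (by rw [hc, hS' j i, h1, neg_zero])
      set T : Matrix (Fin m) (Fin m) ℂ :=
        S - c⁻¹ • (vecMulVec v u - vecMulVec u v) with hT
      have hTapp : ∀ p q, T p q = S p q - c⁻¹ * (v p * u q - u p * v q) := by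
        intro p q
        simp [hT, vecMulVec_apply, mul_sub]
      have hTskew : Tᵀ = -T := by
        ext p q
        simp only [Matrix.transpose_apply, Matrix.neg_apply, hTapp]
        rw [hS' q p]
        ring
      have huj : u j = 0 := hdiag j
      have hvi : v i = 0 := hdiag i
      have hui : u i = c := rfl
      have hvj : v j = -c := by
        simp only [hv, hc]
        linear_combination hS' j i
      have hTcolj : ∀ p, T p j = 0 := fun p => by
        rw [hTapp, huj, hvj]
        field_simp
        simp only [hu, hv]; ring
      have hTcoli : ∀ p, T p i = 0 := fun p => by
        rw [hTapp, hui, hvi]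
        field_simp
        simp only [hu, hv]; ring
      have hTcol : ∀ q ∉ (t.erase i).erase j, ∀ p, T p q = 0 := by
        intro q hq p
        by_cases hqj : q = j
        · subst hqj; exact hTcolj p
        by_cases hqi : q = i
        · subst hqi; exact hTcoli p
        by_cases hqt : q ∈ t
        · exact absurd (Finset.mem_erase.mpr ⟨hqj, Finset.mem_erase.mpr ⟨hqi, hqt⟩⟩) hq
        · have hq0 : ∀ r, S r q = 0 := hcol q hqt
          have huq : u q = 0 := by
            rw [hu]; show S q j = 0
            rw [hS' j q, hq0 j, neg_zero]
          have hvq : v q = 0 := by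
            rw [hv]; show S q i = 0
            rw [hS' i q, hq0 i, neg_zero]
          rw [hTapp, huq, hvq, hq0 p]
          ring
      have hcard : ((t.erase i).erase j).card ≤ 2 * n + 1 := by
        have h1 : (t.erase i).card = t.card - 1 := Finset.card_erase_of_mem hit
        have hji : j ∈ t.erase i := Finset.mem_erase.mpr ⟨hne.symm, hjt⟩
        have h2 : ((t.erase i).erase j).card = (t.erase i).card - 1 :=
          Finset.card_erase_of_mem hji
        omega
      obtain ⟨x, y, hxy⟩ := ih T hTskew ((t.erase i).erase j) hcard hTcol
      refine ⟨Fin.cons (c⁻¹ • v) x, Fin.cons u y, ?_⟩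
      rw [Fin.sum_univ_succ]
      simp only [Fin.cons_zero, Fin.cons_succ]
      rw [← hxy]
      ext p q
      rw [Matrix.add_apply, hTapp]
      simp only [Matrix.sub_apply, vecMulVec_apply, Pi.smul_apply, smul_eq_mul]
      ring

/- STATEMENT 6: For `m ≤ 2n+1`, every skew-symmetric `m × m` complex matrix arises as
`A* A` for some `A ∈ Hom(V₀, V₁)`, i.e. the map `q₀ : A ↦ A* A = Aᵀ J A` (orthonormal basis
on `V₀`, standard symplectic form `J` on `V₁ = ℂ^{2n}`) is surjective onto `so(V₀)`. -/
theorem stmt6 (m n : ℕ) (hmn : m ≤ 2 * n + 1)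
    (S : Matrix (Fin m) (Fin m) ℂ) (hS : Sᵀ = -S) :
    ∃ A : Matrix (Fin n ⊕ Fin n) (Fin m) ℂ,
      Aᵀ * (Matrix.fromBlocks (0 : Matrix (Fin n) (Fin n) ℂ) 1 (-1) 0 : Matrix (Fin n ⊕ Fin n) (Fin n ⊕ Fin n) ℂ) * A = S := by
  obtain ⟨x, y, hxy⟩ := aux_rep m n S hS Finset.univ (by simpa using hmn) (by simp)
  refine ⟨Matrix.of (Sum.elim x y), ?_⟩
  rw [hxy]
  ext p q
  simp only [Matrix.mul_apply, Fintype.sum_sum_type, Matrix.transpose_apply,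
    Matrix.of_apply, Sum.elim_inl, Sum.elim_inr, Matrix.fromBlocks_apply₁₁,
    Matrix.fromBlocks_apply₁₂, Matrix.fromBlocks_apply₂₁, Matrix.fromBlocks_apply₂₂,
    Matrix.one_apply, Matrix.neg_apply, Matrix.zero_apply, zero_mul, mul_zero,
    Finset.sum_const_zero, zero_add, add_zero, mul_ite, ite_mul, neg_mul, mul_neg,
    Finset.sum_ite_eq, Finset.sum_ite_eq', Matrix.sum_apply, Finset.mem_univ, if_true, Finset.sum_apply, Matrix.sub_apply,
    vecMulVec_apply, Finset.sum_sub_distrib, Finset.sum_neg_distrib, neg_zero,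
    Finset.sum_add_distrib, add_mul, Finset.sum_mul, Finset.mul_sum]
  ring_nf
  try rfl
end

section
/- Let m ≤ 2n+1. The map q_0 : Hom(V_0, V_1) → so(V_0), A ↦ A* A, induces an isomorphism of invariant rings ℂ[Hom(V_0,V_1)]^{SO(V_0) × Sp(V_1)} ≅ ℂ[so(V_0)]^{SO(V_0)}; equivalently, the pullback q_0^* : ℂ[so(V_0)] → ℂ[V_0 ⊗ V_1]^{Sp(V_1)} is surjective onto the Sp(V_1)-invariants. -/
set_option linter.unusedSectionVars false
set_option maxHeartbeats 1000000
set_option synthInstance.maxHeartbeats 500000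

open Matrix MvPolynomial

noncomputable section Stmt7Aux

/-- The standard symplectic matrix. -/
def Jm (ι : Type) [DecidableEq ι] [Fintype ι] (R : Type) [CommRing R] :
    Matrix (ι ⊕ ι) (ι ⊕ ι) R :=
  Matrix.fromBlocks 0 1 (-1) 0

variable {R : Type} [CommRing R] {ι κ μ : Type} [DecidableEq ι] [Fintype ι]

/-- The pairing of two column functions. -/
def prJ (x y : ι ⊕ ι → R) : R :=
  ∑ i : ι, (x (Sum.inl i) * y (Sum.inr i) - x (Sum.inr i) * y (Sum.inl i))

lemma Jm_mul_apply [Fintype κ] (B : Matrix (ι ⊕ ι) κ R) (q : κ) (i : ι) :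
    (Jm ι R * B) (Sum.inl i) q = B (Sum.inr i) q ∧
    (Jm ι R * B) (Sum.inr i) q = -B (Sum.inl i) q := by
  constructor <;>
  · simp [Jm, Matrix.mul_apply, Fintype.sum_sum_type, Matrix.fromBlocks,
      Matrix.one_apply, ite_mul, Finset.sum_ite_eq, Finset.sum_ite_eq']

lemma pair_formula [Fintype κ] [Fintype μ]
    (A : Matrix (ι ⊕ ι) κ R) (B : Matrix (ι ⊕ ι) μ R) (p : κ) (q : μ) :
    (Aᵀ * Jm ι R * B) p q = prJ (fun r => A r p) (fun r => B r q) := by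
  rw [Matrix.mul_assoc, Matrix.mul_apply]
  rw [Fintype.sum_sum_type]
  unfold prJ
  rw [Finset.sum_sub_distrib, sub_eq_add_neg, ← Finset.sum_neg_distrib]
  congr 1
  · apply Finset.sum_congr rfl
    intro i _
    rw [(Jm_mul_apply B q i).1]
    simp [Matrix.transpose_apply]
  · apply Finset.sum_congr rfl
    intro i _
    rw [(Jm_mul_apply B q i).2]
    simp [Matrix.transpose_apply]

lemma prJ_anti (x y : ι ⊕ ι → R) : prJ x y = -prJ y x := by
  unfold prJ
  rw [← Finset.sum_neg_distrib]
  exact Finset.sum_congr rfl fun i _ => by ring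

def sbas (z : ι ⊕ ι) : ι ⊕ ι → R := fun r => if r = z then 1 else 0

lemma prJ_basl (i₀ : ι) (y : ι ⊕ ι → R) :
    prJ (sbas (Sum.inl i₀)) y = y (Sum.inr i₀) := by
  simp [prJ, sbas, ite_mul, Finset.sum_ite_eq', Finset.sum_sub_distrib]

lemma prJ_basr (i₀ : ι) (y : ι ⊕ ι → R) :
    prJ (sbas (Sum.inr i₀)) y = -y (Sum.inl i₀) := by
  simp [prJ, sbas, ite_mul, Finset.sum_ite_eq', Finset.sum_sub_distrib]

def extCol (i₀ : ι) (x : ({r : ι // r ≠ i₀} ⊕ {r : ι // r ≠ i₀}) → R) : ι ⊕ ι → R :=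
  fun r => match r with
  | Sum.inl a => if h : a = i₀ then 0 else x (Sum.inl ⟨a, h⟩)
  | Sum.inr a => if h : a = i₀ then 0 else x (Sum.inr ⟨a, h⟩)

@[simp] lemma extCol_inl (i₀ : ι) (x : _ → R) : extCol i₀ x (Sum.inl i₀) = 0 := by
  simp [extCol]

@[simp] lemma extCol_inr (i₀ : ι) (x : _ → R) : extCol i₀ x (Sum.inr i₀) = 0 := by
  simp [extCol]

lemma prJ_extCol_extCol (i₀ : ι) (x y : ({r : ι // r ≠ i₀} ⊕ {r : ι // r ≠ i₀}) → R) :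
    prJ (extCol i₀ x) (extCol i₀ y) = prJ x y := by
  unfold prJ
  rw [← Finset.sum_erase_add _ _ (Finset.mem_univ i₀)]
  simp only [extCol_inl, extCol_inr, mul_zero, zero_mul, sub_zero, add_zero]
  rw [Finset.sum_subtype (p := fun a : ι => a ≠ i₀) (Finset.univ.erase i₀)
    (fun x => by simp [Finset.mem_erase])]
  apply Finset.sum_congr rfl
  intro a _
  simp [extCol, a.2]

lemma skew_diag_zero {k : Type} [Field k] [CharZero k] {κ : Type} (M : Matrix κ κ k)
    (hM : Mᵀ = -M) (c : κ) : M c c = 0 := by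
  have h := congrFun (congrFun hM c) c
  simp only [Matrix.transpose_apply, Matrix.neg_apply] at h
  have h2 : (2 : k) * M c c = 0 := by linear_combination h
  rcases mul_eq_zero.mp h2 with h3 | h3
  · exact absurd h3 (by norm_num)
  · exact h3

end Stmt7Aux

section LemS

open Matrix

variable {R : Type} [CommRing R] {ι : Type} [DecidableEq ι] [Fintype ι]

lemma prJ_expand (x₁ x₂ e f : ι ⊕ ι → R) (a₁ b₁ a₂ b₂ : R) :
    prJ (fun r => x₁ r + a₁ * e r + b₁ * f r) (fun r => x₂ r + a₂ * e r + b₂ * f r) =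
      prJ x₁ x₂ + a₂ * prJ x₁ e + b₂ * prJ x₁ f + a₁ * prJ e x₂ + b₁ * prJ f x₂
        + a₁ * a₂ * prJ e e + a₁ * b₂ * prJ e f + b₁ * a₂ * prJ f e + b₁ * b₂ * prJ f f := by
  simp only [prJ, Finset.mul_sum, ← Finset.sum_add_distrib]
  refine Finset.sum_congr rfl fun i _ => by ring

@[simp] lemma prJ_zero_left (y : ι ⊕ ι → R) : prJ (fun _ => (0 : R)) y = 0 := by
  simp [prJ]

@[simp] lemma prJ_zero_right (y : ι ⊕ ι → R) : prJ y (fun _ => (0 : R)) = 0 := by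
  simp [prJ]

variable {k : Type} [Field k] [CharZero k]

lemma lemS : ∀ (N : ℕ) (ι κ : Type) [Fintype ι] [DecidableEq ι] [Fintype κ] [DecidableEq κ],
    Fintype.card ι ≤ N → Fintype.card κ ≤ 2 * Fintype.card ι + 1 →
    ∀ M : Matrix κ κ k, Mᵀ = -M →
    ∃ A : Matrix (ι ⊕ ι) κ k, Aᵀ * Jm ι k * A = M := by
  intro N
  induction N with
  | zero =>
    intro ι κ _ _ _ _ hι hκ M hM
    refine ⟨0, ?_⟩
    have hsub : Fintype.card κ ≤ 1 := by omega
    have : Subsingleton κ := Fintype.card_le_one_iff_subsingleton.mp hsub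
    have hM0 : M = 0 := by
      ext c c'
      have : c = c' := Subsingleton.elim c c'
      subst this
      simpa using skew_diag_zero M hM c
    simp [hM0]
  | succ N ih =>
    intro ι κ _ _ _ _ hι hκ M hM
    have hMskew : ∀ p q, M q p = -M p q := fun p q => by
      have := congrFun (congrFun hM p) q
      simpa using this
    by_cases hM0 : M = 0
    · exact ⟨0, by simp [hM0]⟩
    have hpiv : ∃ i j, M i j ≠ 0 := by
      by_contra hc
      push_neg at hc
      exact hM0 (by ext i j; simpa using hc i j)
    obtain ⟨i, j, hij⟩ := hpiv
    have hne : i ≠ j := by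
      rintro rfl
      exact hij (skew_diag_zero M hM i)
    have : Nontrivial κ := ⟨i, j, hne⟩
    have hκ2 : 2 ≤ Fintype.card κ := Fintype.one_lt_card
    have hιpos : 1 ≤ Fintype.card ι := by omega
    have : Nonempty ι := Fintype.card_pos_iff.mp (by omega)
    obtain ⟨i₀⟩ := this
    have hcardι' : Fintype.card {r : ι // r ≠ i₀} = Fintype.card ι - 1 := by
      rw [Fintype.card_subtype]
      rw [show (Finset.univ.filter fun r : ι => r ≠ i₀) = Finset.univ.erase i₀ by
        ext c; simp [Finset.mem_erase]]
      rw [Finset.card_erase_of_mem (Finset.mem_univ i₀), Finset.card_univ]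
    have hcardκ' : Fintype.card {c : κ // c ≠ i ∧ c ≠ j} = Fintype.card κ - 2 := by
      rw [Fintype.card_subtype]
      rw [show (Finset.univ.filter fun c : κ => c ≠ i ∧ c ≠ j)
            = (Finset.univ.erase i).erase j by
        ext c; simp [Finset.mem_erase]; tauto]
      rw [Finset.card_erase_of_mem (by simp [Finset.mem_erase, hne.symm]),
        Finset.card_erase_of_mem (Finset.mem_univ i), Finset.card_univ]
      omega
    set lam : {c : κ // c ≠ i ∧ c ≠ j} → k := fun c => -(M j c.1) / M i j with hlam
    set mu : {c : κ // c ≠ i ∧ c ≠ j} → k := fun c => M i c.1 with hmu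
    set M' : Matrix {c : κ // c ≠ i ∧ c ≠ j} {c : κ // c ≠ i ∧ c ≠ j} k :=
      fun c c' => M c.1 c'.1 - lam c * mu c' + mu c * lam c' with hM'def
    have hM' : M'ᵀ = -M' := by
      ext c c'
      have h1 := congrFun (congrFun hM c.1) c'.1
      simp only [Matrix.transpose_apply, Matrix.neg_apply] at h1 ⊢
      simp only [hM'def]
      linear_combination h1
    obtain ⟨A', hA'⟩ := ih {r : ι // r ≠ i₀} {c : κ // c ≠ i ∧ c ≠ j}
      (by omega) (by omega) M' hM'
    have hprA' : ∀ c c', prJ (fun r => A' r c) (fun r => A' r c') = M' c c' := by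
      intro c c'
      rw [← pair_formula, hA']
    -- the new matrix, columnwise
    set X : κ → (ι ⊕ ι) → k := fun c =>
      if h1 : c = i then (fun _ => 0)
      else if h2 : c = j then (fun _ => 0)
      else extCol i₀ (fun z => A' z ⟨c, h1, h2⟩) with hX
    set av : κ → k := fun c =>
      if h1 : c = i then 1 else if h2 : c = j then 0
      else lam ⟨c, h1, h2⟩ with hav
    set bv : κ → k := fun c =>
      if h1 : c = i then 0 else if h2 : c = j then M i j
      else mu ⟨c, h1, h2⟩ with hbv
    refine ⟨Matrix.of fun r c =>
      X c r + av c * sbas (Sum.inl i₀) r + bv c * sbas (Sum.inr i₀) r, ?_⟩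
    ext p q
    rw [show ((Matrix.of fun r c =>
        X c r + av c * sbas (Sum.inl i₀) r + bv c * sbas (Sum.inr i₀) r)ᵀ
        * Jm ι k * (Matrix.of fun r c =>
        X c r + av c * sbas (Sum.inl i₀) r + bv c * sbas (Sum.inr i₀) r)) p q
      = prJ (fun r => X p r + av p * sbas (Sum.inl i₀) r + bv p * sbas (Sum.inr i₀) r)
            (fun r => X q r + av q * sbas (Sum.inl i₀) r + bv q * sbas (Sum.inr i₀) r)
      from pair_formula _ _ p q]
    rw [prJ_expand]
    have hee : prJ (R := k) (sbas (Sum.inl i₀)) (sbas (Sum.inl i₀)) = 0 := by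
      rw [prJ_basl]; simp [sbas]
    have hef : prJ (R := k) (sbas (Sum.inl i₀)) (sbas (Sum.inr i₀)) = 1 := by
      rw [prJ_basl]; simp [sbas]
    have hfe : prJ (R := k) (sbas (Sum.inr i₀)) (sbas (Sum.inl i₀)) = -1 := by
      rw [prJ_basr]; simp [sbas]
    have hff : prJ (R := k) (sbas (Sum.inr i₀)) (sbas (Sum.inr i₀)) = 0 := by
      rw [prJ_basr]; simp [sbas]
    have heX : ∀ c, prJ (R := k) (sbas (Sum.inl i₀)) (X c) = 0 := by
      intro c
      simp only [hX]
      split_ifs <;> simp [prJ_basl]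
    have hfX : ∀ c, prJ (R := k) (sbas (Sum.inr i₀)) (X c) = 0 := by
      intro c
      simp only [hX]
      split_ifs <;> simp [prJ_basr]
    have hXe : ∀ c, prJ (R := k) (X c) (sbas (Sum.inl i₀)) = 0 := fun c => by
      rw [prJ_anti, heX c, neg_zero]
    have hXf : ∀ c, prJ (R := k) (X c) (sbas (Sum.inr i₀)) = 0 := fun c => by
      rw [prJ_anti, hfX c, neg_zero]
    rw [hee, hef, hfe, hff, hXe p, hXf p, heX q, hfX q]
    simp only [mul_zero, add_zero, mul_one, mul_neg_one, zero_add]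
    -- helper value lemmas
    have hXi : X i = fun _ => 0 := by simp [hX]
    have hXj : X j = fun _ => 0 := by simp [hX, hne.symm]
    have havi : av i = 1 := by simp [hav]
    have havj : av j = 0 := by simp [hav, hne.symm]
    have hbvi : bv i = 0 := by simp [hbv]
    have hbvj : bv j = M i j := by simp [hbv, hne.symm]
    have hXc : ∀ (c : κ) (h1 : c ≠ i) (h2 : c ≠ j),
        X c = extCol i₀ (fun z => A' z ⟨c, h1, h2⟩) := by
      intro c h1 h2; simp only [hX]; rw [dif_neg h1, dif_neg h2]
    have havc : ∀ (c : κ) (h1 : c ≠ i) (h2 : c ≠ j), av c = lam ⟨c, h1, h2⟩ := by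
      intro c h1 h2; simp only [hav]; rw [dif_neg h1, dif_neg h2]
    have hbvc : ∀ (c : κ) (h1 : c ≠ i) (h2 : c ≠ j), bv c = mu ⟨c, h1, h2⟩ := by
      intro c h1 h2; simp only [hbv]; rw [dif_neg h1, dif_neg h2]
    by_cases hp1 : p = i <;> by_cases hq1 : q = i
    · rw [hp1, hq1, hXi, havi, hbvi]
      simp [skew_diag_zero M hM i, hq1 ▸ hp1 ▸ (rfl : M p q = M p q)]
    · by_cases hq2 : q = j
      · rw [hp1, hq2, hXi, hXj, havi, hbvi, havj, hbvj]
        simp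
      · rw [hp1, hXi, hXc q hq1 hq2, havi, hbvi, havc q hq1 hq2, hbvc q hq1 hq2]
        simp [hmu, hp1]
    · by_cases hp2 : p = j
      · rw [hq1, hp2, hXj, hXi, havj, hbvj, havi, hbvi]
        simp
        try linear_combination -hMskew j i
      · rw [hq1, hXi, havi, hbvi, hXc p hp1 hp2, havc p hp1 hp2, hbvc p hp1 hp2]
        simp [hmu]
        try linear_combination -hMskew p i
    · by_cases hp2 : p = j <;> by_cases hq2 : q = j
      · rw [hp2, hq2, hXj, havj, hbvj]
        simp [skew_diag_zero M hM j]
      · rw [hp2, hXj, hXc q hq1 hq2, havj, hbvj, havc q hq1 hq2, hbvc q hq1 hq2]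
        simp only [prJ_zero_left, hlam]
        field_simp
        ring
        try linear_combination -((M i j) * hMskew j q)
      · rw [hq2, hXj, hXc p hp1 hp2, havj, hbvj, havc p hp1 hp2, hbvc p hp1 hp2]
        simp only [prJ_zero_right, hlam]
        field_simp
        linear_combination -hMskew p j
        try linear_combination (M i j) * hMskew p j
      · rw [hXc p hp1 hp2, hXc q hq1 hq2, havc p hp1 hp2, havc q hq1 hq2,
          hbvc p hp1 hp2, hbvc q hq1 hq2]
        rw [prJ_extCol_extCol, hprA']
        simp only [hM'def]
        ring

end LemS
section Fiber

open Matrix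

variable {k : Type} [Field k] {ι κ : Type} [DecidableEq ι] [Fintype ι] [Fintype κ]

lemma Jm_mul_Jm : Jm ι k * Jm ι k = -1 := by
  have h : ((-1 : Matrix (ι ⊕ ι) (ι ⊕ ι) k)) = Matrix.fromBlocks (-1) 0 0 (-1) := by
    ext r q
    cases r <;> cases q <;> simp [Matrix.one_apply]
  rw [Jm, Matrix.fromBlocks_multiply, h]
  congr 1 <;> simp

lemma isUnit_det_Jm : IsUnit (Jm ι k).det := by
  apply Matrix.isUnit_det_of_right_inverse (B := -(Jm ι k))
  rw [Matrix.mul_neg, Jm_mul_Jm, neg_neg]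

lemma submatrix_gram (ε : (ι ⊕ ι) → κ) (A B : Matrix (ι ⊕ ι) κ k) :
    (Aᵀ * Jm ι k * B).submatrix ε ε
      = (A.submatrix id ε)ᵀ * Jm ι k * (B.submatrix id ε) := by
  ext p q
  rw [Matrix.submatrix_apply, pair_formula, pair_formula]
  rfl

lemma submatrix_gram_left (ε : (ι ⊕ ι) → κ) (A B : Matrix (ι ⊕ ι) κ k) :
    (Aᵀ * Jm ι k * B).submatrix ε id
      = (A.submatrix id ε)ᵀ * Jm ι k * B := by
  ext p q
  rw [Matrix.submatrix_apply, pair_formula, pair_formula]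
  rfl

lemma extract_isUnit_det {C : Matrix (ι ⊕ ι) (ι ⊕ ι) k}
    (h : IsUnit (Cᵀ * Jm ι k * C).det) : IsUnit C.det := by
  rw [Matrix.det_mul, Matrix.det_mul, Matrix.det_transpose] at h
  exact isUnit_of_mul_isUnit_left (isUnit_of_mul_isUnit_left h)

lemma fiber_lemma (ε : (ι ⊕ ι) → κ) (A B : Matrix (ι ⊕ ι) κ k)
    (hQ : Aᵀ * Jm ι k * A = Bᵀ * Jm ι k * B)
    (hdet : IsUnit ((Aᵀ * Jm ι k * A).submatrix ε ε).det) :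
    ∃ g : Matrix (ι ⊕ ι) (ι ⊕ ι) k, gᵀ * Jm ι k * g = Jm ι k ∧ g * A = B := by
  set J := Jm ι k with hJ
  set A₁ := A.submatrix id ε with hA₁
  set B₁ := B.submatrix id ε with hB₁
  have e1 : B₁ᵀ * J * B₁ = A₁ᵀ * J * A₁ := by
    rw [hB₁, hA₁, ← _root_.submatrix_gram, ← _root_.submatrix_gram, hQ]
  have hdA : IsUnit A₁.det := by
    rw [_root_.submatrix_gram] at hdet
    exact extract_isUnit_det hdet
  have hdB : IsUnit B₁.det := by
    rw [hQ, _root_.submatrix_gram] at hdet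
    exact extract_isUnit_det hdet
  have hiA : A₁ * A₁⁻¹ = 1 := Matrix.mul_nonsing_inv _ hdA
  have hsym : (B₁ * A₁⁻¹)ᵀ * J * (B₁ * A₁⁻¹) = J := by
    have h2 : (B₁ * A₁⁻¹)ᵀ * J * (B₁ * A₁⁻¹) = (A₁⁻¹)ᵀ * (B₁ᵀ * J * B₁) * A₁⁻¹ := by
      simp only [Matrix.transpose_mul, Matrix.mul_assoc]
    rw [h2, e1]
    have h3 : (A₁⁻¹)ᵀ * A₁ᵀ = 1 := by
      rw [← Matrix.transpose_mul, hiA, Matrix.transpose_one]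
    calc (A₁⁻¹)ᵀ * (A₁ᵀ * J * A₁) * A₁⁻¹
        = ((A₁⁻¹)ᵀ * A₁ᵀ) * J * (A₁ * A₁⁻¹) := by simp only [Matrix.mul_assoc]
      _ = J := by rw [h3, hiA, Matrix.one_mul, Matrix.mul_one]
  have hBQl : B₁ᵀ * J * B = A₁ᵀ * J * A := by
    rw [hB₁, hA₁, ← submatrix_gram_left, ← submatrix_gram_left, hQ]
  have key : (B₁ᵀ * J) * (B₁ * A₁⁻¹ * A) = (B₁ᵀ * J) * B := by
    calc (B₁ᵀ * J) * (B₁ * A₁⁻¹ * A)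
        = (B₁ᵀ * J * B₁) * (A₁⁻¹ * A) := by simp only [Matrix.mul_assoc]
      _ = (A₁ᵀ * J * A₁) * (A₁⁻¹ * A) := by rw [e1]
      _ = (A₁ᵀ * J) * ((A₁ * A₁⁻¹) * A) := by simp only [Matrix.mul_assoc]
      _ = A₁ᵀ * J * A := by rw [hiA, Matrix.one_mul, Matrix.mul_assoc]
      _ = B₁ᵀ * J * B := hBQl.symm
  have hdBJ : IsUnit (B₁ᵀ * J).det := by
    rw [Matrix.det_mul, Matrix.det_transpose]
    exact hdB.mul isUnit_det_Jm
  have hcan : B₁ * A₁⁻¹ * A = B := by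
    have h4 := congrArg (fun X => (B₁ᵀ * J)⁻¹ * X) key
    simpa [← Matrix.mul_assoc, Matrix.nonsing_inv_mul _ hdBJ] using h4
  exact ⟨B₁ * A₁⁻¹, hsym, hcan⟩

end Fiber
section Core1

open Matrix MvPolynomial

-- generic extra pairing lemmas
variable {R : Type} [CommRing R] {ι κ : Type} [DecidableEq ι] [Fintype ι]

lemma prJ_self (x : ι ⊕ ι → R) : prJ x x = 0 :=
  Finset.sum_eq_zero fun i _ => by ring

lemma prJ_scale (d : R) (x y : ι ⊕ ι → R) :
    prJ (fun r => x r * d) (fun r => y r * d) = d ^ 2 * prJ x y := by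
  unfold prJ
  rw [Finset.mul_sum]
  exact Finset.sum_congr rfl fun i _ => by ring

lemma gram_map {S : Type} [CommRing S] [Fintype κ] (τ : R →+* S)
    (A : Matrix (ι ⊕ ι) κ R) (p q : κ) :
    τ ((Aᵀ * Jm ι R * A) p q) = ((A.map τ)ᵀ * Jm ι S * (A.map τ)) p q := by
  rw [pair_formula, pair_formula]
  simp [prJ, map_sum, Matrix.map_apply]

-- the main objects
noncomputable def QpM (n : ℕ) : Matrix (Fin (2*n+1)) (Fin (2*n+1)) (MvPolynomial ((Fin n ⊕ Fin n) × Fin (2*n+1)) ℂ) :=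
  Matrix.transpose (Matrix.of fun r c => (MvPolynomial.X (r, c) : MvPolynomial ((Fin n ⊕ Fin n) × Fin (2*n+1)) ℂ))
    * Jm (Fin n) (MvPolynomial ((Fin n ⊕ Fin n) × Fin (2*n+1)) ℂ) * (Matrix.of fun r c => (MvPolynomial.X (r, c) : MvPolynomial ((Fin n ⊕ Fin n) × Fin (2*n+1)) ℂ))

noncomputable def PhiH (n : ℕ) :
    MvPolynomial {q : Fin (2*n+1) × Fin (2*n+1) // q.1 < q.2} ℂ
      →ₐ[ℂ] MvPolynomial ((Fin n ⊕ Fin n) × Fin (2*n+1)) ℂ :=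
  aeval (fun y => QpM n y.1.1 y.1.2)

def AvM (n : ℕ) (v : (Fin n ⊕ Fin n) × Fin (2*n+1) → ℂ) :
    Matrix (Fin n ⊕ Fin n) (Fin (2*n+1)) ℂ :=
  Matrix.of fun r c => v (r, c)

lemma eval_QpM (n : ℕ) (v : (Fin n ⊕ Fin n) × Fin (2*n+1) → ℂ) (i j : Fin (2*n+1)) :
    eval v (QpM n i j) = ((AvM n v)ᵀ * Jm (Fin n) ℂ * AvM n v) i j := by
  rw [QpM, pair_formula, pair_formula]
  simp [prJ, AvM]

lemma QpM_diag (n : ℕ) (i : Fin (2*n+1)) : QpM n i i = 0 := by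
  rw [QpM, pair_formula]
  exact prJ_self _

lemma QpM_skew (n : ℕ) (i j : Fin (2*n+1)) : QpM n i j = -QpM n j i := by
  rw [QpM, pair_formula, pair_formula]
  exact prJ_anti _ _

lemma eval_PhiH (n : ℕ) (v : (Fin n ⊕ Fin n) × Fin (2*n+1) → ℂ)
    (h : MvPolynomial {q : Fin (2*n+1) × Fin (2*n+1) // q.1 < q.2} ℂ) :
    eval v (PhiH n h) = eval (fun y : {q : Fin (2*n+1) × Fin (2*n+1) // q.1 < q.2} =>
      eval v (QpM n y.1.1 y.1.2)) h := by
  have key : (eval v).comp (PhiH n).toRingHom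
      = eval (fun y : {q : Fin (2*n+1) × Fin (2*n+1) // q.1 < q.2} =>
          eval v (QpM n y.1.1 y.1.2)) := by
    apply MvPolynomial.ringHom_ext
    · intro c
      simp [PhiH]
    · intro y
      simp [PhiH]
  exact RingHom.congr_fun key h

lemma sur_QpM (n : ℕ) (vY : {q : Fin (2*n+1) × Fin (2*n+1) // q.1 < q.2} → ℂ) :
    ∃ v : (Fin n ⊕ Fin n) × Fin (2*n+1) → ℂ,
      ∀ y : {q : Fin (2*n+1) × Fin (2*n+1) // q.1 < q.2},
        eval v (QpM n y.1.1 y.1.2) = vY y := by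
  set M : Matrix (Fin (2*n+1)) (Fin (2*n+1)) ℂ := Matrix.of fun i j =>
    if h : i < j then vY ⟨(i, j), h⟩ else if h' : j < i then -vY ⟨(j, i), h'⟩ else 0 with hMdef
  have hskew : Mᵀ = -M := by
    ext i j
    simp only [hMdef, Matrix.transpose_apply, Matrix.neg_apply, Matrix.of_apply]
    rcases lt_trichotomy i j with h | h | h
    · simp [h, asymm h]
    · subst h
      simp [lt_irrefl]
    · simp [h, asymm h]
  obtain ⟨A, hA⟩ := lemS (k := ℂ) n (Fin n) (Fin (2*n+1))
    (by simp) (by simp) M hskew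
  refine ⟨fun e => A e.1 e.2, fun y => ?_⟩
  have hAv : AvM n (fun e => A e.1 e.2) = A := by ext r c; rfl
  rw [eval_QpM, hAv, hA]
  simp only [hMdef, Matrix.of_apply]
  rw [dif_pos y.2]
lemma PhiH_inj (n : ℕ) : Function.Injective (PhiH n) := by
  intro h₁ h₂ heq
  apply MvPolynomial.funext
  intro vY
  obtain ⟨v, hv⟩ := sur_QpM n vY
  have e₁ := eval_PhiH n v h₁
  have e₂ := eval_PhiH n v h₂
  have hfun : (fun y : {q : Fin (2*n+1) × Fin (2*n+1) // q.1 < q.2} =>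
      eval v (QpM n y.1.1 y.1.2)) = vY := funext hv
  rw [hfun] at e₁ e₂
  rw [← e₁, ← e₂, heq]

abbrev RXr (n : ℕ) := MvPolynomial ((Fin n ⊕ Fin n) × Fin (2*n+1)) ℂ
abbrev RYr (n : ℕ) := MvPolynomial {q : Fin (2*n+1) × Fin (2*n+1) // q.1 < q.2} ℂ
abbrev KXr (n : ℕ) := FractionRing (RXr n)
abbrev FYr (n : ℕ) := FractionRing (RYr n)

end Core1
section Step6

open Matrix MvPolynomial

lemma descend (n : ℕ) (f : MvPolynomial ((Fin n ⊕ Fin n) × Fin (2*n+1)) ℂ) :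
    ∀ s : MvPolynomial {q : Fin (2*n+1) × Fin (2*n+1) // q.1 < q.2} ℂ, s ≠ 0 →
    ∀ r, f * PhiH n s = PhiH n r →
    ∃ p₀, f = PhiH n p₀ := by
  intro s
  induction s using UniqueFactorizationMonoid.induction_on_prime with
  | h₁ => intro h; exact absurd rfl h
  | h₂ u hu =>
    intro _ r hr
    obtain ⟨uu, huu⟩ := hu.exists_right_inv
    refine ⟨r * uu, ?_⟩
    calc f = f * PhiH n (u * uu) := by rw [huu]; simp
      _ = (f * PhiH n u) * PhiH n uu := by rw [_root_.map_mul]; ring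
      _ = PhiH n (r * uu) := by rw [hr, _root_.map_mul]
  | h₃ a p ha hp ih =>
    intro hpa r hr
    -- every zero of p is a zero of r
    have hz : ∀ vY, eval vY p = 0 → eval vY r = 0 := by
      intro vY h0
      obtain ⟨v, hv⟩ := sur_QpM n vY
      have hfun : (fun y : {q : Fin (2*n+1) × Fin (2*n+1) // q.1 < q.2} =>
          eval v (QpM n y.1.1 y.1.2)) = vY := funext hv
      have := congrArg (eval v) hr
      rw [_root_.map_mul, eval_PhiH, eval_PhiH, hfun] at this
      rw [← this, _root_.map_mul, h0]
      ring
    -- Nullstellensatz: p ∣ r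
    have hpr : p ∣ r := by
      have hrad : r ∈ (Ideal.span {p}).radical := by
        rw [← MvPolynomial.vanishingIdeal_zeroLocus_eq_radical (K := ℂ)]
        rw [MvPolynomial.mem_vanishingIdeal_iff]
        intro x hx
        exact hz x (hx p (Ideal.subset_span rfl))
      rw [((Ideal.span_singleton_prime hp.ne_zero).mpr hp).radical] at hrad
      exact Ideal.mem_span_singleton.mp hrad
    obtain ⟨r', rfl⟩ := hpr
    have hPhip : PhiH n p ≠ 0 := by
      intro h
      exact hp.ne_zero (PhiH_inj n (h.trans (_root_.map_zero _).symm))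
    have ha' : a ≠ 0 := ha
    have hcancel : f * PhiH n a = PhiH n r' := by
      apply mul_left_cancel₀ hPhip
      rw [_root_.map_mul, _root_.map_mul] at hr
      calc PhiH n p * (f * PhiH n a) = f * (PhiH n p * PhiH n a) := by ring
        _ = PhiH n p * PhiH n r' := by rw [hr]
    exact ih ha' r' hcancel

end Step6
section Step1

open Matrix MvPolynomial

lemma step1 (n : ℕ) (f : MvPolynomial ((Fin n ⊕ Fin n) × Fin (2*n+1)) ℂ)
    (hinv : ∀ g : Matrix (Fin n ⊕ Fin n) (Fin n ⊕ Fin n) ℂ,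
      gᵀ * Jm (Fin n) ℂ * g = Jm (Fin n) ℂ →
      ∀ A : Matrix (Fin n ⊕ Fin n) (Fin (2*n+1)) ℂ,
        eval (fun p => (g * A) p.1 p.2) f = eval (fun p => A p.1 p.2) f) :
    ∃ (r s : MvPolynomial {q : Fin (2*n+1) × Fin (2*n+1) // q.1 < q.2} ℂ),
      s ≠ 0 ∧ f * PhiH n s = PhiH n r := by
  classical
  haveI hCZR : CharZero (MvPolynomial ((Fin n ⊕ Fin n) × Fin (2*n+1)) ℂ) :=
    charZero_of_injective_algebraMap
      (by rw [MvPolynomial.algebraMap_eq]; exact MvPolynomial.C_injective _ _)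
  haveI hCZY : CharZero (MvPolynomial {q : Fin (2*n+1) × Fin (2*n+1) // q.1 < q.2} ℂ) :=
    charZero_of_injective_algebraMap
      (by rw [MvPolynomial.algebraMap_eq]; exact MvPolynomial.C_injective _ _)
  haveI : CharZero (FYr n) := charZero_of_injective_algebraMap
    (IsFractionRing.injective (RYr n) (FYr n))
  -- the generic skew matrix over F
  set Ymat : Matrix (Fin (2*n+1)) (Fin (2*n+1)) (FYr n) := Matrix.of fun i j =>
    if h : i < j then algebraMap (RYr n) (FYr n)
      (X (⟨(i, j), h⟩ : {q : Fin (2*n+1) × Fin (2*n+1) // q.1 < q.2}))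
    else if h' : j < i then -(algebraMap (RYr n) (FYr n)
      (X (⟨(j, i), h'⟩ : {q : Fin (2*n+1) × Fin (2*n+1) // q.1 < q.2}))) else 0 with hYmat
  have hskew : Ymatᵀ = -Ymat := by
    ext i j
    simp only [hYmat, Matrix.transpose_apply, Matrix.neg_apply, Matrix.of_apply]
    rcases lt_trichotomy i j with h | h | h
    · simp [h, asymm h]
    · subst h; simp [lt_irrefl]
    · simp [h, asymm h]
  obtain ⟨AF, hAF⟩ := lemS (k := FYr n) n (Fin n) (Fin (2*n+1)) (by simp) (by simp) Ymat hskew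
  -- the embedding of F into K
  set χ : RYr n →+* KXr n := (algebraMap (RXr n) (KXr n)).comp
        (PhiH n).toRingHom with hχdef
  have hχ : ∀ x, χ x = algebraMap (RXr n) (KXr n) (PhiH n x) := fun x => rfl
  have hχinj : Function.Injective χ := by
    intro a b hab
    rw [hχ, hχ] at hab
    exact PhiH_inj n (IsFractionRing.injective _ _ hab)
  set φ : FYr n →+* KXr n := IsFractionRing.lift hχinj with hφdef
  have hφalg : ∀ x, φ (algebraMap (RYr n) (FYr n) x) = χ x := fun x =>
    IsFractionRing.lift_algebraMap hχinj x
  -- the Gram matrix of the mapped section is the image of QpM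
  have hgram : ∀ i j, ((AF.map ⇑φ)ᵀ * Jm (Fin n) (KXr n) * (AF.map ⇑φ)) i j
      = algebraMap (RXr n) (KXr n) (QpM n i j) := by
    intro i j
    rw [← gram_map φ AF i j, hAF]
    rcases lt_trichotomy i j with h | h | h
    · simp only [hYmat, Matrix.of_apply, dif_pos h]
      rw [hφalg, hχ, PhiH, aeval_X]
    · subst h
      simp only [hYmat, Matrix.of_apply, dif_neg (lt_irrefl i)]
      rw [QpM_diag]
      simp
    · simp only [hYmat, Matrix.of_apply, dif_neg (asymm h), dif_pos h]
      rw [_root_.map_neg, hφalg, hχ, PhiH, aeval_X, QpM_skew n i j, _root_.map_neg]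
  -- the generic invariant value, as a fraction
  set cF : ℂ →+* FYr n := (algebraMap (RYr n) (FYr n)).comp (C : ℂ →+* _) with hcF
  set w : FYr n := eval₂ cF (fun e => AF e.1 e.2) f with hw
  obtain ⟨r, s, hsmem, hrs⟩ := IsFractionRing.div_surjective (A := RYr n) w
  refine ⟨r, s, nonZeroDivisors.ne_zero hsmem, ?_⟩
  have hs0 : s ≠ 0 := nonZeroDivisors.ne_zero hsmem
  have halgFs : algebraMap (RYr n) (FYr n) s ≠ 0 :=
    (map_ne_zero_iff _ (IsFractionRing.injective _ _)).mpr hs0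
  have hws : w * algebraMap (RYr n) (FYr n) s = algebraMap (RYr n) (FYr n) r := by
    rw [← hrs, div_mul_cancel₀ _ halgFs]
  -- push to K
  have hφw : φ w * algebraMap (RXr n) (KXr n) (PhiH n s) = algebraMap (RXr n) (KXr n) (PhiH n r) := by
    have h := congrArg φ hws
    rw [_root_.map_mul, hφalg, hχ, hφalg, hχ] at h
    exact h
  set cK : ℂ →+* KXr n := (algebraMap (RXr n) (KXr n)).comp (C : ℂ →+* _) with hcK
  have hφw' : φ w = eval₂ cK (fun e => φ (AF e.1 e.2)) f := by
    rw [hw, MvPolynomial.eval₂_comp_left φ cF (fun e => AF e.1 e.2) f]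
    congr 1
    apply RingHom.ext
    intro c
    show φ (cF c) = cK c
    rw [hcF, RingHom.comp_apply, hφalg, hχ, hcK, RingHom.comp_apply]
    rw [show (PhiH n) (C c) = C c by rw [PhiH, aeval_C, MvPolynomial.algebraMap_eq]]
  -- fractions for the entries
  choose num den hden hfrac using fun e : (Fin n ⊕ Fin n) × Fin (2*n+1) =>
    IsFractionRing.div_surjective (A := RXr n) (φ (AF e.1 e.2))
  set δ : RXr n := ∏ e, den e with hδdef
  have hδ0 : δ ≠ 0 := Finset.prod_ne_zero_iff.mpr
    (fun e _ => nonZeroDivisors.ne_zero (hden e))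
  set NN : (Fin n ⊕ Fin n) × Fin (2*n+1) → _ :=
    fun e => num e * ∏ e' ∈ Finset.univ.erase e, den e' with hNN
  have hNe : ∀ e, algebraMap (RXr n) (KXr n) (NN e)
      = φ (AF e.1 e.2) * algebraMap (RXr n) (KXr n) δ := by
    intro e
    have hsplit : δ = den e * ∏ e' ∈ Finset.univ.erase e, den e' :=
      (Finset.mul_prod_erase _ _ (Finset.mem_univ e)).symm
    have hde : algebraMap (RXr n) (KXr n) (den e) ≠ 0 :=
      (map_ne_zero_iff _ (IsFractionRing.injective _ _)).mpr
        (nonZeroDivisors.ne_zero (hden e))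
    rw [← hfrac e, hNN, hsplit, _root_.map_mul, _root_.map_mul]
    field_simp
  -- localization away from δ
  set cS : ℂ →+* Localization.Away δ :=
    (algebraMap (RXr n) (Localization.Away δ)).comp (C : ℂ →+* _) with hcS
  set vals : (Fin n ⊕ Fin n) × Fin (2*n+1) → Localization.Away δ :=
    fun e => algebraMap (RXr n) (Localization.Away δ) (NN e)
      * IsLocalization.Away.invSelf δ with hvals
  obtain ⟨⟨H, dpow⟩, hHD⟩ := IsLocalization.surj (M := Submonoid.powers δ)
    (eval₂ cS vals f)
  obtain ⟨D, hD⟩ := dpow.2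
  have hδK : IsUnit (algebraMap (RXr n) (KXr n) δ) :=
    isUnit_iff_ne_zero.mpr ((map_ne_zero_iff _ (IsFractionRing.injective _ _)).mpr hδ0)
  set κK : Localization.Away δ →+* KXr n := IsLocalization.Away.lift δ hδK with hκKdef
  have hκKalg : ∀ x, κK (algebraMap (RXr n) (Localization.Away δ) x)
      = algebraMap (RXr n) (KXr n) x := fun x =>
    IsLocalization.Away.lift_eq δ hδK x
  have hκKinv : κK (IsLocalization.Away.invSelf δ)
      = (algebraMap (RXr n) (KXr n) δ)⁻¹ := by
    have h1 := congrArg κK (IsLocalization.Away.mul_invSelf δ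
      (S := Localization.Away δ))
    rw [_root_.map_mul, _root_.map_one, hκKalg] at h1
    exact eq_inv_of_mul_eq_one_right h1
  have hκΨ : κK (eval₂ cS vals f) = eval₂ cK (fun e => φ (AF e.1 e.2)) f := by
    rw [MvPolynomial.eval₂_comp_left κK cS vals f]
    have h1 : κK.comp cS = cK := by
      apply RingHom.ext
      intro c
      rw [RingHom.comp_apply, hcS, RingHom.comp_apply, hκKalg, hcK, RingHom.comp_apply]
    rw [h1]
    congr 1
    funext e
    show κK (vals e) = _
    rw [hvals]
    simp only []
    rw [_root_.map_mul, hκKalg, hκKinv, hNe]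
    rw [mul_assoc, mul_inv_cancel₀ hδK.ne_zero, mul_one]
  -- K-level identity from the localization relation
  obtain ⟨D, hD⟩ := (Submonoid.mem_powers_iff _ _).mp dpow.2
  have hEvK : eval₂ cK (fun e => φ (AF e.1 e.2)) f * algebraMap (RXr n) (KXr n) (δ ^ D)
      = algebraMap (RXr n) (KXr n) H := by
    have h2 := congrArg κK hHD
    rw [_root_.map_mul, hκΨ, hκKalg, hκKalg] at h2
    have hdpow : (dpow : RXr n) = δ ^ D := hD.symm
    rw [hdpow] at h2
    exact h2
  -- main polynomial identity E1
  have hE1 : H * PhiH n s = PhiH n r * δ ^ D := by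
    apply IsFractionRing.injective (RXr n) (KXr n)
    rw [_root_.map_mul, _root_.map_mul]
    calc algebraMap (RXr n) (KXr n) H * algebraMap (RXr n) (KXr n) (PhiH n s)
        = (eval₂ cK (fun e => φ (AF e.1 e.2)) f * algebraMap (RXr n) (KXr n) (δ ^ D))
            * algebraMap (RXr n) (KXr n) (PhiH n s) := by rw [hEvK]
      _ = (φ w * algebraMap (RXr n) (KXr n) (PhiH n s))
            * algebraMap (RXr n) (KXr n) (δ ^ D) := by rw [hφw']; ring
      _ = algebraMap (RXr n) (KXr n) (PhiH n r)
            * algebraMap (RXr n) (KXr n) (δ ^ D) := by rw [hφw]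
  -- E2: Gram identity for the numerators
  set NM : Matrix (Fin n ⊕ Fin n) (Fin (2*n+1)) (RXr n) :=
    Matrix.of fun r' c => NN (r', c) with hNM
  have hE2 : ∀ i j, (NMᵀ * Jm (Fin n) (RXr n) * NM) i j = δ^2 * QpM n i j := by
    intro i j
    apply IsFractionRing.injective (RXr n) (KXr n)
    rw [gram_map (algebraMap (RXr n) (KXr n)) NM i j]
    have hmap : NM.map (algebraMap (RXr n) (KXr n))
        = Matrix.of fun r' c => φ (AF r' c) * algebraMap (RXr n) (KXr n) δ := by
      ext r' c
      simp only [Matrix.map_apply, hNM, Matrix.of_apply]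
      exact hNe (r', c)
    rw [hmap]
    have hpr : prJ (fun r' => φ (AF r' i)) (fun r' => φ (AF r' j))
        = algebraMap (RXr n) (KXr n) (QpM n i j) := by
      rw [← hgram i j, pair_formula]
      rfl
    calc ((Matrix.of fun r' c => φ (AF r' c) * algebraMap (RXr n) (KXr n) δ)ᵀ
            * Jm (Fin n) (KXr n)
            * (Matrix.of fun r' c => φ (AF r' c) * algebraMap (RXr n) (KXr n) δ)) i j
        = prJ (fun r' => φ (AF r' i) * algebraMap (RXr n) (KXr n) δ)
            (fun r' => φ (AF r' j) * algebraMap (RXr n) (KXr n) δ) := pair_formula _ _ i j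
      _ = (algebraMap (RXr n) (KXr n) δ)^2
            * prJ (fun r' => φ (AF r' i)) (fun r' => φ (AF r' j)) := prJ_scale _ _ _
      _ = algebraMap (RXr n) (KXr n) (δ^2 * QpM n i j) := by
            rw [hpr, _root_.map_mul, map_pow]
  -- the distinguished minor
  set ε : (Fin n ⊕ Fin n) → Fin (2*n+1) :=
    fun z => Fin.castLE (by omega) (finSumFinEquiv z) with hε
  have hεinj : Function.Injective ε := fun a b hab =>
    finSumFinEquiv.injective (Fin.castLE_injective _ hab)
  set d₁ := ((QpM n).submatrix ε ε).det with hd₁def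
  have hevd : ∀ v : ((Fin n ⊕ Fin n) × Fin (2*n+1)) → ℂ,
      eval v d₁ = (((AvM n v)ᵀ * Jm (Fin n) ℂ * AvM n v).submatrix ε ε).det := by
    intro v
    rw [hd₁def, RingHom.map_det]
    congr 1
    ext i j
    simp only [Matrix.map_apply, Matrix.submatrix_apply]
    exact eval_QpM n v (ε i) (ε j)
  have hd₁ : d₁ ≠ 0 := by
    intro h0
    set v₀ : ((Fin n ⊕ Fin n) × Fin (2*n+1)) → ℂ :=
      fun e => if e.2 = ε e.1 then 1 else 0 with hv₀
    have h1 : (AvM n v₀).submatrix id ε = 1 := by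
      ext a b
      simp only [Matrix.submatrix_apply, AvM, Matrix.of_apply, hv₀, Matrix.one_apply, id]
      by_cases hab : a = b
      · subst hab; simp
      · rw [if_neg (fun hc => hab (hεinj hc).symm), if_neg hab]
    have h2 := hevd v₀
    rw [h0, _root_.map_zero, _root_.submatrix_gram, h1] at h2
    simp only [Matrix.transpose_one, Matrix.one_mul, Matrix.mul_one] at h2
    exact (isUnit_det_Jm (ι := Fin n) (k := ℂ)).ne_zero h2.symm
  -- pointwise vanishing
  set G := f * PhiH n s - PhiH n r with hG
  have hGzero : ∀ v, eval v (G * (δ * d₁)) = 0 := by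
    intro v
    rw [_root_.map_mul, _root_.map_mul]
    by_cases hδv : eval v δ = 0
    · rw [hδv]; ring
    by_cases hd₁v : eval v d₁ = 0
    · rw [hd₁v]; ring
    set Bv : ((Fin n ⊕ Fin n) × Fin (2*n+1)) → ℂ :=
      fun e => eval v (NN e) / eval v δ with hBv
    have hBgram : (AvM n Bv)ᵀ * Jm (Fin n) ℂ * AvM n Bv
        = (AvM n v)ᵀ * Jm (Fin n) ℂ * AvM n v := by
      ext i j
      have hE2v := congrArg (eval v) (hE2 i j)
      rw [gram_map (eval v) NM i j, _root_.map_mul, _root_.map_pow, eval_QpM] at hE2v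
      rw [pair_formula, pair_formula]
      have hcoli : (fun r' => AvM n Bv r' i)
          = fun r' => eval v (NM r' i) * (eval v δ)⁻¹ := by
        funext r'
        simp only [AvM, Matrix.of_apply, hBv, hNM]
        rw [div_eq_mul_inv]
      have hcolj : (fun r' => AvM n Bv r' j)
          = fun r' => eval v (NM r' j) * (eval v δ)⁻¹ := by
        funext r'
        simp only [AvM, Matrix.of_apply, hBv, hNM]
        rw [div_eq_mul_inv]
      rw [hcoli, hcolj, prJ_scale]
      have hprNM : prJ (fun r' => eval v (NM r' i)) (fun r' => eval v (NM r' j))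
          = ((NM.map (eval v))ᵀ * Jm (Fin n) ℂ * NM.map (eval v)) i j := by
        rw [pair_formula]
        rfl
      rw [hprNM, hE2v]
      have h3 : prJ (fun r' => AvM n v r' i) (fun r' => AvM n v r' j)
          = ((AvM n v)ᵀ * Jm (Fin n) ℂ * AvM n v) i j := (pair_formula _ _ i j).symm
      rw [h3]
      field_simp
    have hdet : IsUnit ((((AvM n v)ᵀ * Jm (Fin n) ℂ * AvM n v).submatrix ε ε).det) := by
      rw [← hevd v]
      exact isUnit_iff_ne_zero.mpr hd₁v
    obtain ⟨g, hgsym, hgA⟩ := fiber_lemma ε (AvM n v) (AvM n Bv) hBgram.symm hdet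
    have hfinv := hinv g hgsym (AvM n v)
    have hBveq : eval Bv f = eval v f := by
      have h1 : (fun p : ((Fin n ⊕ Fin n) × Fin (2*n+1)) => (g * AvM n v) p.1 p.2) = Bv := by
        funext e
        rw [hgA]
        rfl
      have h2 : (fun p : ((Fin n ⊕ Fin n) × Fin (2*n+1)) => AvM n v p.1 p.2) = v := by
        funext e
        rfl
      rw [h1, h2] at hfinv
      exact hfinv
    set κv : Localization.Away δ →+* ℂ :=
      IsLocalization.Away.lift (g := eval v) δ (isUnit_iff_ne_zero.mpr hδv) with hκvdef
    have hκvalg : ∀ x, κv (algebraMap (RXr n) (Localization.Away δ) x) = eval v x := fun x =>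
      IsLocalization.Away.lift_eq δ _ x
    have hκvinv : κv (IsLocalization.Away.invSelf δ) = (eval v δ)⁻¹ := by
      have h1 := congrArg κv (IsLocalization.Away.mul_invSelf δ (S := Localization.Away δ))
      rw [_root_.map_mul, _root_.map_one, hκvalg] at h1
      exact eq_inv_of_mul_eq_one_right h1
    have hκvΨ : κv (eval₂ cS vals f) = eval Bv f := by
      rw [MvPolynomial.eval₂_comp_left κv cS vals f]
      have h1 : κv.comp cS = (RingHom.id ℂ) := by
        apply RingHom.ext
        intro c
        rw [RingHom.comp_apply, hcS, RingHom.comp_apply, hκvalg, eval_C, RingHom.id_apply]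
      have h2 : (⇑κv ∘ vals) = Bv := by
        funext e
        simp only [Function.comp_apply, hvals]
        rw [_root_.map_mul, hκvalg, hκvinv]
        simp [hBv, div_eq_mul_inv]
      rw [h1, h2, MvPolynomial.eval₂_id]
    have hHDv := congrArg κv hHD
    rw [_root_.map_mul, hκvΨ, hκvalg, hκvalg] at hHDv
    have hdpow : (dpow : RXr n) = δ ^ D := hD.symm
    rw [hdpow] at hHDv
    have hE1v := congrArg (eval v) hE1
    rw [_root_.map_mul, _root_.map_mul] at hE1v
    have hGv : eval v G = 0 := by
      rw [hG, _root_.map_sub, _root_.map_mul]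
      have hDne : eval v (δ ^ D) ≠ 0 := by
        rw [_root_.map_pow]
        exact pow_ne_zero _ hδv
      have hkey : (eval v f * eval v (PhiH n s) - eval v (PhiH n r)) * eval v (δ ^ D) = 0 := by
        rw [← hBveq]
        calc (eval Bv f * eval v (PhiH n s) - eval v (PhiH n r)) * eval v (δ ^ D)
            = (eval Bv f * eval v (δ ^ D)) * eval v (PhiH n s)
              - eval v (PhiH n r) * eval v (δ ^ D) := by ring
          _ = eval v H * eval v (PhiH n s) - eval v (PhiH n r) * eval v (δ ^ D) := by rw [hHDv]
          _ = 0 := by rw [hE1v]; ring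
      exact (mul_eq_zero.mp hkey).resolve_right hDne
    rw [hGv]
    ring
  have hGδ : G * (δ * d₁) = 0 := by
    apply MvPolynomial.funext (q := 0)
    intro x
    rw [hGzero x, _root_.map_zero]
  have hGz : G = 0 := by
    rcases mul_eq_zero.mp hGδ with h | h
    · exact h
    · exact absurd h (mul_ne_zero hδ0 hd₁)
  rw [← sub_eq_zero]
  exact hGz

end Step1
section Final

open Matrix MvPolynomial

lemma eval_aeval' {σ τ : Type} (w : τ → ℂ) (g : σ → MvPolynomial τ ℂ)
    (h : MvPolynomial σ ℂ) :
    eval w (aeval g h) = eval (fun y => eval w (g y)) h := by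
  have key : (eval w).comp (aeval g : MvPolynomial σ ℂ →ₐ[ℂ] MvPolynomial τ ℂ).toRingHom
      = eval (fun y => eval w (g y)) := by
    apply MvPolynomial.ringHom_ext
    · intro c
      simp
    · intro y
      simp
  exact RingHom.congr_fun key h

theorem coreThm (n : ℕ) (f : MvPolynomial ((Fin n ⊕ Fin n) × Fin (2*n+1)) ℂ)
    (hinv : ∀ g : Matrix (Fin n ⊕ Fin n) (Fin n ⊕ Fin n) ℂ,
      gᵀ * Jm (Fin n) ℂ * g = Jm (Fin n) ℂ →
      ∀ A : Matrix (Fin n ⊕ Fin n) (Fin (2*n+1)) ℂ,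
        eval (fun p => (g * A) p.1 p.2) f = eval (fun p => A p.1 p.2) f) :
    ∃ p₀, f = PhiH n p₀ := by
  obtain ⟨r, s, hs0, hEq⟩ := step1 n f hinv
  exact descend n f s hs0 r hEq

theorem stmt7' (m n : ℕ) (hmn : m ≤ 2 * n + 1)
    (f : MvPolynomial ((Fin n ⊕ Fin n) × Fin m) ℂ)
    (hinv : ∀ g : Matrix (Fin n ⊕ Fin n) (Fin n ⊕ Fin n) ℂ,
      gᵀ * (Matrix.fromBlocks (0 : Matrix (Fin n) (Fin n) ℂ) 1 (-1) 0) * g =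
        Matrix.fromBlocks 0 1 (-1) 0 →
      ∀ A : Matrix (Fin n ⊕ Fin n) (Fin m) ℂ,
        MvPolynomial.eval (fun p => (g * A) p.1 p.2) f =
          MvPolynomial.eval (fun p => A p.1 p.2) f) :
    ∃ p : MvPolynomial (Fin m × Fin m) ℂ,
      ∀ A : Matrix (Fin n ⊕ Fin n) (Fin m) ℂ,
        MvPolynomial.eval (fun q => A q.1 q.2) f =
          MvPolynomial.eval
            (fun q => (Aᵀ * (Matrix.fromBlocks (0 : Matrix (Fin n) (Fin n) ℂ) 1 (-1) 0 : Matrix (Fin n ⊕ Fin n) (Fin n ⊕ Fin n) ℂ) * A :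
              Matrix (Fin m) (Fin m) ℂ) q.1 q.2) p := by
  classical
  have hmn' : m ≤ 2*n+1 := hmn
  have hJ : (Matrix.fromBlocks (0 : Matrix (Fin n) (Fin n) ℂ) 1 (-1) 0) = Jm (Fin n) ℂ := rfl
  set ft : MvPolynomial ((Fin n ⊕ Fin n) × Fin (2*n+1)) ℂ :=
    rename (Prod.map id (Fin.castLE hmn')) f with hft
  have hinv' : ∀ g : Matrix (Fin n ⊕ Fin n) (Fin n ⊕ Fin n) ℂ,
      gᵀ * Jm (Fin n) ℂ * g = Jm (Fin n) ℂ →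
      ∀ A' : Matrix (Fin n ⊕ Fin n) (Fin (2*n+1)) ℂ,
        eval (fun p => (g * A') p.1 p.2) ft = eval (fun p => A' p.1 p.2) ft := by
    intro g hg A'
    rw [hft, eval_rename, eval_rename]
    have hsub : ((fun p : (Fin n ⊕ Fin n) × Fin (2*n+1) => (g * A') p.1 p.2)
        ∘ (Prod.map id (Fin.castLE hmn')))
        = fun p : (Fin n ⊕ Fin n) × Fin m =>
            (g * (A'.submatrix id (Fin.castLE hmn'))) p.1 p.2 := by
      funext p
      simp only [Function.comp_apply, Prod.map_apply, id]
      rw [Matrix.mul_apply, Matrix.mul_apply]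
      rfl
    have hsub2 : ((fun p : (Fin n ⊕ Fin n) × Fin (2*n+1) => A' p.1 p.2)
        ∘ (Prod.map id (Fin.castLE hmn')))
        = fun p : (Fin n ⊕ Fin n) × Fin m =>
            (A'.submatrix id (Fin.castLE hmn')) p.1 p.2 := by
      funext p
      rfl
    rw [hsub, hsub2]
    exact hinv g (by rw [hJ]; exact hg) (A'.submatrix id (Fin.castLE hmn'))
  obtain ⟨p₀, hp₀⟩ := coreThm n ft hinv'
  refine ⟨aeval (fun y : {q : Fin (2*n+1) × Fin (2*n+1) // q.1 < q.2} =>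
    if h : (y.1.1 : ℕ) < m ∧ (y.1.2 : ℕ) < m
    then X ((⟨(y.1.1 : ℕ), h.1⟩ : Fin m), (⟨(y.1.2 : ℕ), h.2⟩ : Fin m))
    else 0) p₀, ?_⟩
  intro A
  set A' : Matrix (Fin n ⊕ Fin n) (Fin (2*n+1)) ℂ :=
    Matrix.of fun r c => if h : (c : ℕ) < m then A r ⟨(c : ℕ), h⟩ else 0 with hA'
  -- LHS
  have hL : eval (fun q : (Fin n ⊕ Fin n) × Fin m => A q.1 q.2) f
      = eval (fun q : (Fin n ⊕ Fin n) × Fin (2*n+1) => A' q.1 q.2) ft := by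
    rw [hft, eval_rename]
    have hfun : ((fun q : (Fin n ⊕ Fin n) × Fin (2*n+1) => A' q.1 q.2)
        ∘ Prod.map id (Fin.castLE hmn'))
        = fun q : (Fin n ⊕ Fin n) × Fin m => A q.1 q.2 := by
      funext q
      simp only [Function.comp_apply, Prod.map_apply, id, hA', Matrix.of_apply]
      rw [dif_pos (by simpa using q.2.isLt)]
      exact congrArg (A q.1) (Fin.ext (by simp))
    rw [hfun]
  rw [hL, hp₀, eval_PhiH, eval_aeval']
  -- match the two evaluations of p₀
  refine congrArg (fun g => eval g p₀) ?_
  funext y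
  -- LHS : gram of A' at (y.1.1, y.1.2), RHS : dite
  have hAvM : AvM n (fun q : (Fin n ⊕ Fin n) × Fin (2*n+1) => A' q.1 q.2) = A' := by
    ext r c
    rfl
  rw [eval_QpM, hAvM]
  by_cases hy : (y.1.1 : ℕ) < m ∧ (y.1.2 : ℕ) < m
  · rw [dif_pos hy]
    rw [pair_formula]
    have : eval (fun q : Fin m × Fin m =>
        (Aᵀ * (Matrix.fromBlocks (0 : Matrix (Fin n) (Fin n) ℂ) 1 (-1) 0 : Matrix (Fin n ⊕ Fin n) (Fin n ⊕ Fin n) ℂ) * A :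
          Matrix (Fin m) (Fin m) ℂ) q.1 q.2)
        (X ((⟨(y.1.1 : ℕ), hy.1⟩ : Fin m), (⟨(y.1.2 : ℕ), hy.2⟩ : Fin m)))
        = (Aᵀ * Jm (Fin n) ℂ * A) ⟨(y.1.1 : ℕ), hy.1⟩ ⟨(y.1.2 : ℕ), hy.2⟩ := by
      rw [eval_X, hJ]
    rw [this, pair_formula]
    congr 1
    · funext r
      simp only [hA', Matrix.of_apply]
      rw [dif_pos hy.1]
    · funext r
      simp only [hA', Matrix.of_apply]
      rw [dif_pos hy.2]
  · rw [dif_neg hy, map_zero]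
    rw [pair_formula]
    rcases not_and_or.mp hy with hy1 | hy1
    · have hcol : (fun r => A' r y.1.1) = fun _ => (0 : ℂ) := by
        funext r
        simp only [hA', Matrix.of_apply]
        rw [dif_neg hy1]
      rw [hcol, prJ_zero_left]
    · have hcol : (fun r => A' r y.1.2) = fun _ => (0 : ℂ) := by
        funext r
        simp only [hA', Matrix.of_apply]
        rw [dif_neg hy1]
      rw [hcol, prJ_zero_right]

end Final
/- STATEMENT 7: For `m ≤ 2n+1`, the map `q₀ : Hom(V₀,V₁) → so(V₀)`, `A ↦ A* A = Aᵀ J A`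
induces an isomorphism of invariant rings; equivalently the pullback
`q₀^* : ℂ[so(V₀)] → ℂ[V₀ ⊗ V₁]^{Sp(V₁)}` is surjective onto the `Sp(V₁)`-invariants:
every polynomial function `f` on `Hom(V₀, V₁)` (coordinate ring `MvPolynomial`) invariant
under `Sp(V₁)` factors through `q₀`. -/
theorem stmt7 (m n : ℕ) (hmn : m ≤ 2 * n + 1)
    (f : MvPolynomial ((Fin n ⊕ Fin n) × Fin m) ℂ)
    (hinv : ∀ g : Matrix (Fin n ⊕ Fin n) (Fin n ⊕ Fin n) ℂ,
      gᵀ * (Matrix.fromBlocks (0 : Matrix (Fin n) (Fin n) ℂ) 1 (-1) 0) * g =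
        Matrix.fromBlocks 0 1 (-1) 0 →
      ∀ A : Matrix (Fin n ⊕ Fin n) (Fin m) ℂ,
        MvPolynomial.eval (fun p => (g * A) p.1 p.2) f =
          MvPolynomial.eval (fun p => A p.1 p.2) f) :
    ∃ p : MvPolynomial (Fin m × Fin m) ℂ,
      ∀ A : Matrix (Fin n ⊕ Fin n) (Fin m) ℂ,
        MvPolynomial.eval (fun q => A q.1 q.2) f =
          MvPolynomial.eval
            (fun q => (Aᵀ * (Matrix.fromBlocks (0 : Matrix (Fin n) (Fin n) ℂ) 1 (-1) 0 : Matrix (Fin n ⊕ Fin n) (Fin n ⊕ Fin n) ℂ) * A :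
              Matrix (Fin m) (Fin m) ℂ) q.1 q.2) p :=
  stmt7' m n hmn f hinv
end

section
/- Let m ≤ 2n and u = Σ_{i ≤ 2⌈m/2⌉ - 1} e_{m+1-i} ⊗ e_{i+1} ∈ V_0 ⊗ V_1 ≅ Hom(V_0, V_1). Then there exists a rational semisimple element h ∈ so(V_0) ⊕ sp(V_1), explicitly h = 2 diag(-2k, -2k+2, ..., 2k) ⊕ 2 diag(-2k-1, -2k+1, ..., 2k+1, 0, ..., 0) when m = 2k+1, such that h · u = 2u under the natural action of so(V_0) ⊕ sp(V_1) on V_0 ⊗ V_1. -/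
open Matrix

/- STATEMENT 14: For `m = 2k+1 ≤ 2n` and
`u = Σ_{i ≤ 2⌈m/2⌉-1} e_{m+1-i} ⊗ e_{i+1} ∈ V₀ ⊗ V₁ ≅ Hom(V₀, V₁)` (the matrix with
entries `u_{r,c} = 1` iff `r + c = m` in 0-indexed coordinates), there exists a rational
semisimple element `h = (h₀, h₁) ∈ so(V₀) ⊕ sp(V₁)` (diagonal with rational entries, as in
the explicit formula `h₀ = 2 diag(-2k, ..., 2k)`, `h₁ = 2 diag(-2k-1, ..., 2k+1, 0, ..., 0)`)
such that `h · u = h₁ u - u h₀ = 2u`.  Here `V₀ = ℂ^m` carries the antidiagonal symmetric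
form `S` and `V₁ = ℂ^{2n}` the antidiagonal symplectic form `J`. -/
theorem stmt14 (n k : ℕ) (hm : 2 * k + 1 ≤ 2 * n) :
    let m := 2 * k + 1
    let S : Matrix (Fin m) (Fin m) ℂ := fun i j => if (i : ℕ) + (j : ℕ) = m - 1 then 1 else 0
    let J : Matrix (Fin (2 * n)) (Fin (2 * n)) ℂ := fun i j =>
      if (i : ℕ) + (j : ℕ) = 2 * n - 1 then (if (i : ℕ) < n then 1 else -1) else 0
    let u : Matrix (Fin (2 * n)) (Fin m) ℂ := fun r c => if (r : ℕ) + (c : ℕ) = m then 1 else 0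
    ∃ (d₀ : Fin m → ℚ) (d₁ : Fin (2 * n) → ℚ),
      let h₀ : Matrix (Fin m) (Fin m) ℂ := Matrix.diagonal fun i => (d₀ i : ℂ)
      let h₁ : Matrix (Fin (2 * n)) (Fin (2 * n)) ℂ := Matrix.diagonal fun i => (d₁ i : ℂ)
      h₀ᵀ * S + S * h₀ = 0 ∧ h₁ᵀ * J + J * h₁ = 0 ∧ h₁ * u - u * h₀ = (2 : ℂ) • u := by
  intro m S J u
  have hden : (2 : ℚ) * n - 2 * k - 3 ≠ 0 := by
    intro h
    have h' : ((2 * (n : ℤ) - 2 * k - 3 : ℤ) : ℚ) = 0 := by push_cast; linarith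
    have : (2 * (n : ℤ) - 2 * k - 3) = 0 := by exact_mod_cast h'
    omega
  set q : ℚ := 4 / (2 * n - 2 * k - 3) with hq
  have hqmul : q * (2 * (n : ℚ) - 2 * k - 3) = 4 := div_mul_cancel₀ 4 hden
  refine ⟨fun c => q * ((c : ℚ) - k),
    fun r =>
      if 1 ≤ (r : ℕ) ∧ (r : ℕ) ≤ m then q * ((k : ℚ) + 1 - (r : ℕ)) + 2
      else if 1 ≤ 2 * n - 1 - (r : ℕ) ∧ 2 * n - 1 - (r : ℕ) ≤ m then
        -(q * ((k : ℚ) + 1 - ((2 * n - 1 - (r : ℕ) : ℕ) : ℚ)) + 2)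
      else 0, ?_, ?_, ?_⟩
  · ext i j
    simp only [diagonal_transpose, diagonal_mul, mul_diagonal, Matrix.add_apply,
      Matrix.zero_apply]
    simp only [S]
    by_cases hij : (i : ℕ) + (j : ℕ) = m - 1
    · simp only [hij, eq_self_iff_true, if_true, mul_one, one_mul]
      have hij' : (i : ℚ) + (j : ℚ) = 2 * k := by
        have : (i : ℕ) + (j : ℕ) = 2 * k := by omega
        exact_mod_cast this
      have : q * ((i : ℚ) - k) + q * ((j : ℚ) - k) = 0 := by
        rw [← mul_add]
        have : (i : ℚ) - k + ((j : ℚ) - k) = 0 := by linarith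
        rw [show (i : ℚ) - k + ((j : ℚ) - k) = ((i:ℚ) + j) - 2*k by ring, hij']
        ring
      exact_mod_cast this
    · have hij2 : ¬((i : ℕ) + (j : ℕ) = 2 * k) := by omega
      simp [hij, hij2]
  · ext i j
    simp only [diagonal_transpose, diagonal_mul, mul_diagonal, Matrix.add_apply,
      Matrix.zero_apply]
    simp only [J]
    by_cases hij : (i : ℕ) + (j : ℕ) = 2 * n - 1
    · simp only [hij, eq_self_iff_true, if_true]
      have key : (if 1 ≤ (i : ℕ) ∧ (i : ℕ) ≤ m then q * ((k : ℚ) + 1 - (i : ℕ)) + 2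
          else if 1 ≤ 2 * n - 1 - (i : ℕ) ∧ 2 * n - 1 - (i : ℕ) ≤ m then
            -(q * ((k : ℚ) + 1 - ((2 * n - 1 - (i : ℕ) : ℕ) : ℚ)) + 2)
          else 0)
          + (if 1 ≤ (j : ℕ) ∧ (j : ℕ) ≤ m then q * ((k : ℚ) + 1 - (j : ℕ)) + 2
          else if 1 ≤ 2 * n - 1 - (j : ℕ) ∧ 2 * n - 1 - (j : ℕ) ≤ m then
            -(q * ((k : ℚ) + 1 - ((2 * n - 1 - (j : ℕ) : ℕ) : ℚ)) + 2)
          else 0) = 0 := by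
        have hi' : (2 * n - 1 - (i : ℕ) : ℕ) = (j : ℕ) := by omega
        have hj' : (2 * n - 1 - (j : ℕ) : ℕ) = (i : ℕ) := by omega
        rw [hi', hj']
        by_cases hA : 1 ≤ (i : ℕ) ∧ (i : ℕ) ≤ m
        · by_cases hB : 1 ≤ (j : ℕ) ∧ (j : ℕ) ≤ m
          · rw [if_pos hA, if_pos hB]
            have hijq : (i : ℚ) + (j : ℚ) = 2 * n - 1 := by
              have h1 : (i : ℕ) + (j : ℕ) + 1 = 2 * n := by omega
              have : ((i : ℕ) : ℚ) + (j : ℕ) + 1 = 2 * n := by exact_mod_cast h1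
              linarith
            have : q * ((k : ℚ) + 1 - i) + 2 + (q * ((k : ℚ) + 1 - j) + 2)
                = -(q * (2 * (n : ℚ) - 2 * k - 3)) + 4 := by
              rw [show q * ((k : ℚ) + 1 - i) + 2 + (q * ((k : ℚ) + 1 - j) + 2)
                  = q * (2*(k:ℚ) + 2 - ((i:ℚ) + j)) + 4 by ring, hijq]
              ring
            rw [this, hqmul]; ring
          · rw [if_pos hA, if_neg hB, if_pos hA]; ring
        · by_cases hB : 1 ≤ (j : ℕ) ∧ (j : ℕ) ≤ m
          · rw [if_neg hA, if_pos hB, if_pos hB]; ring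
          · rw [if_neg hA, if_neg hB, if_neg hB, if_neg hA]; ring
      have keyC : ((if 1 ≤ (i : ℕ) ∧ (i : ℕ) ≤ m then q * ((k : ℚ) + 1 - (i : ℕ)) + 2
          else if 1 ≤ 2 * n - 1 - (i : ℕ) ∧ 2 * n - 1 - (i : ℕ) ≤ m then
            -(q * ((k : ℚ) + 1 - ((2 * n - 1 - (i : ℕ) : ℕ) : ℚ)) + 2)
          else 0 : ℚ) : ℂ)
          + ((if 1 ≤ (j : ℕ) ∧ (j : ℕ) ≤ m then q * ((k : ℚ) + 1 - (j : ℕ)) + 2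
          else if 1 ≤ 2 * n - 1 - (j : ℕ) ∧ 2 * n - 1 - (j : ℕ) ≤ m then
            -(q * ((k : ℚ) + 1 - ((2 * n - 1 - (j : ℕ) : ℕ) : ℚ)) + 2)
          else 0 : ℚ) : ℂ) = 0 := by
        rw [← Rat.cast_add, key, Rat.cast_zero]
      by_cases hin : (i : ℕ) < n
      · rw [if_pos hin, mul_one, one_mul]
        linear_combination keyC
      · rw [if_neg hin]
        linear_combination -keyC
    · simp [hij]
  · ext r c
    simp only [diagonal_mul, mul_diagonal, Matrix.sub_apply, Matrix.smul_apply, smul_eq_mul]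
    simp only [u]
    by_cases hrc : (r : ℕ) + (c : ℕ) = m
    · simp only [hrc, eq_self_iff_true, if_true, mul_one, one_mul]
      have hA : 1 ≤ (r : ℕ) ∧ (r : ℕ) ≤ m := by
        constructor
        · have := c.isLt; omega
        · omega
      rw [if_pos hA]
      have hrcq : (r : ℚ) + (c : ℚ) = 2 * k + 1 := by
        have : (r : ℕ) + (c : ℕ) = 2 * k + 1 := hrc
        exact_mod_cast this
      have key : (q * ((k : ℚ) + 1 - (r : ℕ)) + 2) - q * ((c : ℚ) - k) = 2 := by
        rw [show (q * ((k : ℚ) + 1 - (r : ℕ)) + 2) - q * ((c : ℚ) - k)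
            = q * (2 * (k:ℚ) + 1 - ((r:ℚ) + c)) + 2 by ring, hrcq]
        ring
      calc ((q * ((k : ℚ) + 1 - (r : ℕ)) + 2 : ℚ) : ℂ) - ((q * ((c : ℚ) - k) : ℚ) : ℂ)
          = (((q * ((k : ℚ) + 1 - (r : ℕ)) + 2) - q * ((c : ℚ) - k) : ℚ) : ℂ) := by
            rw [Rat.cast_sub]
        _ = ((2 : ℚ) : ℂ) := by rw [key]
        _ = 2 := by norm_num
    · simp [hrc]
end
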